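/- With the notation above, a polynomial f = Σ_{k=0}^{p−1} f_k x^k of degree < p lies in the left ideal R·g, where g = [x − L(c_1), …, x − L(c_m)]_ℓ, if and only if its coefficient vector (f_0, …, f_{p−1}) lies in the left kernel of the p × m Wronskian matrix W_p(c_1,…,c_m) whose (i,j) entry is δ^{i-1}(c_j). -/

import Mathlib

open scoped BigOperators

/-- Coefficients of the product `f·g` in the differential operator ring `F[x;δ]`. -/
noncomputable def skewMul {F : Type*} [Field F] (δ : F → F) (f g : ℕ →₀ F) (n : ℕ) : F :=
  ∑ i ∈ f.support, ∑ j ∈ g.support,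
    if j ≤ n then f i * (Nat.choose i (n - j) : F) * δ^[i - (n - j)] (g j) else 0

/-- `f` is a right divisor of `g` in `F[x;δ]`: `g = q·f` for some `q`. -/
noncomputable def RDvd {F : Type*} [Field F] (δ : F → F) (f g : ℕ →₀ F) : Prop :=
  ∃ q : ℕ →₀ F, ∀ n : ℕ, g n = skewMul δ q f n

/-- `g` is monic of degree `m`. -/
def IsMonicOfDeg {F : Type*} [Field F] (g : ℕ →₀ F) (m : ℕ) : Prop :=
  g m = 1 ∧ ∀ n : ℕ, m < n → g n = 0

open Finset

namespace SkewAux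

variable {F : Type*} [Field F]

variable {δ : F → F}

section basic
variable (hadd : ∀ a b : F, δ (a + b) = δ a + δ b)
  (hmul : ∀ a b : F, δ (a * b) = a * δ b + δ a * b)

include hadd

lemma d0 : δ 0 = 0 := by simpa using hadd 0 0

lemma iter0 (k : ℕ) : δ^[k] 0 = 0 := by
  induction k with
  | zero => simp
  | succ n ih => rw [Function.iterate_succ_apply, d0 hadd, ih]

lemma iter_add (k : ℕ) (a b : F) : δ^[k] (a + b) = δ^[k] a + δ^[k] b := by
  induction k generalizing a b with
  | zero => simp
  | succ n ih => rw [Function.iterate_succ_apply, Function.iterate_succ_apply,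
      Function.iterate_succ_apply, hadd, ih]

lemma dneg (a : F) : δ (-a) = - δ a := by
  have h := hadd a (-a)
  rw [add_neg_cancel, d0 hadd] at h
  exact eq_neg_of_add_eq_zero_right h.symm

lemma iter_neg (k : ℕ) (a : F) : δ^[k] (-a) = - δ^[k] a := by
  induction k generalizing a with
  | zero => simp
  | succ n ih => rw [Function.iterate_succ_apply, dneg hadd, ih,
      Function.iterate_succ_apply]

lemma d_sum {ι : Type*} (s : Finset ι) (f : ι → F) :
    δ (∑ i ∈ s, f i) = ∑ i ∈ s, δ (f i) :=
  map_sum (AddMonoidHom.mk' δ hadd) f s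

lemma iter_sum (k : ℕ) {ι : Type*} (s : Finset ι) (f : ι → F) :
    δ^[k] (∑ i ∈ s, f i) = ∑ i ∈ s, δ^[k] (f i) := by
  induction k generalizing f with
  | zero => simp
  | succ n ih =>
    rw [Function.iterate_succ_apply', ih, d_sum hadd]
    simp [Function.iterate_succ_apply']

lemma d_nsmul (n : ℕ) (a : F) : δ ((n : F) * a) = (n : F) * δ a := by
  induction n with
  | zero => simp [d0 hadd]
  | succ m ih => push_cast; rw [add_mul, add_mul, hadd, ih, one_mul, one_mul]

lemma iter_nsmul (k n : ℕ) (a : F) : δ^[k] ((n : F) * a) = (n : F) * δ^[k] a := by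
  induction k generalizing a with
  | zero => simp
  | succ j ih => rw [Function.iterate_succ_apply, d_nsmul hadd, ih,
      ← Function.iterate_succ_apply]

include hmul

lemma d1 : δ 1 = 0 := by simpa using hmul 1 1

lemma iter1 (k : ℕ) (hk : 1 ≤ k) : δ^[k] 1 = 0 := by
  obtain ⟨j, rfl⟩ := Nat.exists_eq_add_of_le hk
  rw [add_comm, Function.iterate_add_apply, Function.iterate_one, d1 hadd hmul, iter0 hadd]

lemma leibniz (n : ℕ) (a b : F) :
    δ^[n] (a * b) = ∑ k ∈ range (n + 1),
      (n.choose k : F) * (δ^[k] a * δ^[n - k] b) := by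
  induction n with
  | zero => simp
  | succ n ih =>
    have step : ∀ k ∈ range (n + 1),
        δ ((n.choose k : F) * (δ^[k] a * δ^[n - k] b))
        = (n.choose k : F) * (δ^[k] a * δ^[n + 1 - k] b)
          + (n.choose k : F) * (δ^[k + 1] a * δ^[n - k] b) := by
      intro k hk
      rw [mem_range, Nat.lt_succ_iff] at hk
      have hnk : n + 1 - k = (n - k) + 1 := by omega
      rw [d_nsmul hadd, hmul, hnk, Function.iterate_succ_apply' δ (n - k) b,
        Function.iterate_succ_apply' δ k a]
      ring
    have e1 : ∀ k : ℕ, (((n+1).choose (k+1) : ℕ) : F)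
        * (δ^[k+1] a * δ^[n + 1 - (k+1)] b)
        = (n.choose k : F) * (δ^[k+1] a * δ^[n - k] b)
          + (n.choose (k+1) : F) * (δ^[k+1] a * δ^[n - k] b) := by
      intro k
      have h2 : n + 1 - (k + 1) = n - k := by omega
      rw [h2, Nat.choose_succ_succ]
      push_cast
      ring
    calc δ^[n+1] (a*b) = δ (δ^[n] (a*b)) := Function.iterate_succ_apply' δ n (a*b)
      _ = δ (∑ k ∈ range (n+1), (n.choose k : F) * (δ^[k] a * δ^[n - k] b)) := by rw [ih]
      _ = ∑ k ∈ range (n+1), δ ((n.choose k : F) * (δ^[k] a * δ^[n - k] b)) := d_sum hadd _ _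
      _ = ∑ k ∈ range (n+1), ((n.choose k : F) * (δ^[k] a * δ^[n + 1 - k] b)
            + (n.choose k : F) * (δ^[k + 1] a * δ^[n - k] b)) := Finset.sum_congr rfl step
      _ = ∑ k ∈ range (n+1+1), ((n+1).choose k : F) * (δ^[k] a * δ^[n + 1 - k] b) := by
          have hA : ∑ k ∈ range (n+1), (n.choose k : F) * (δ^[k] a * δ^[n + 1 - k] b)
              = ∑ k ∈ range n, (n.choose (k+1) : F) * (δ^[k+1] a * δ^[n - k] b)
                + (δ^[0] a * δ^[n + 1 - 0] b) := by
            rw [Finset.sum_range_succ']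
            congr 1
            · apply Finset.sum_congr rfl
              intro k _
              have h2 : n + 1 - (k + 1) = n - k := by omega
              rw [h2]
            · simp
          have hT : ∑ k ∈ range (n+1+1), ((n+1).choose k : F) * (δ^[k] a * δ^[n + 1 - k] b)
              = ∑ k ∈ range (n+1), ((n.choose k : F) * (δ^[k+1] a * δ^[n - k] b)
                  + (n.choose (k+1) : F) * (δ^[k+1] a * δ^[n - k] b))
                + (δ^[0] a * δ^[n + 1 - 0] b) := by
            rw [Finset.sum_range_succ']
            congr 1
            · exact Finset.sum_congr rfl (fun k _ => e1 k)
            · simp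
          have hsplit : ∑ k ∈ range (n+1), (n.choose (k+1) : F) * (δ^[k+1] a * δ^[n - k] b)
              = ∑ k ∈ range n, (n.choose (k+1) : F) * (δ^[k+1] a * δ^[n - k] b) := by
            rw [Finset.sum_range_succ]
            simp
          rw [Finset.sum_add_distrib, hA, hT, Finset.sum_add_distrib, hsplit]
          ring

omit hmul

/-- extend the support sums in `skewMul` to ranges. -/
lemma skewMul_eq_sum_range (f g : ℕ →₀ F) (N : ℕ)
    (hfN : ∀ i ∈ f.support, i < N) (hgN : ∀ j ∈ g.support, j < N) (n : ℕ) :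
    skewMul δ f g n = ∑ i ∈ range N, ∑ j ∈ range N,
      (if j ≤ n then f i * (Nat.choose i (n - j) : F) * δ^[i - (n - j)] (g j) else 0) := by
  unfold skewMul
  rw [Finset.sum_subset (fun i hi => Finset.mem_range.2 (hfN i hi))]
  · apply Finset.sum_congr rfl
    intro i _
    apply Finset.sum_subset (fun j hj => Finset.mem_range.2 (hgN j hj))
    intro j _ hj
    have : g j = 0 := Finsupp.notMem_support_iff.1 hj
    simp [this, iter0 hadd]
  · intro i _ hi
    have : f i = 0 := Finsupp.notMem_support_iff.1 hi
    simp [this]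

/-- Evaluation of a skew polynomial at `c` (as operator applied to `c`). -/
noncomputable def Ev (δ : F → F) (c : F) (h : ℕ →₀ F) : F :=
  ∑ n ∈ h.support, h n * δ^[n] c

omit hadd in
lemma Ev_eq_sum_range (c : F) (h : ℕ →₀ F) (N : ℕ) (hN : ∀ n, N ≤ n → h n = 0) :
    Ev δ c h = ∑ n ∈ range N, h n * δ^[n] c := by
  unfold Ev
  apply Finset.sum_subset
  · intro n hn
    rw [Finset.mem_range]
    by_contra hc
    exact (Finsupp.mem_support_iff.1 hn) (hN n (le_of_not_gt hc))
  · intro n _ hn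
    rw [Finsupp.notMem_support_iff.1 hn, zero_mul]

include hmul in
/-- Key homomorphism property: evaluation of a skew product. -/
lemma Ev_skewMul (q s h : ℕ →₀ F) (hh : ∀ n, h n = skewMul δ q s n) (c : F) :
    Ev δ c h = ∑ i ∈ q.support, q i * δ^[i] (Ev δ c s) := by
  classical
  -- choose a bound N for all supports
  obtain ⟨N, hNq, hNs, hNh⟩ : ∃ N : ℕ, (∀ i ∈ q.support, i < N) ∧
      (∀ j ∈ s.support, j < N) ∧ (∀ n ∈ h.support, n < N) := by
    refine ⟨(q.support ∪ s.support ∪ h.support).sup id + 1, ?_, ?_, ?_⟩ <;>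
      intro i hi <;>
      exact Nat.lt_succ_of_le (Finset.le_sup (f := id) (by simp [hi]))
  have hev : Ev δ c h = ∑ n ∈ range (2 * N), h n * δ^[n] c := by
    apply Ev_eq_sum_range
    intro n hn
    by_contra hc
    exact absurd (hNh n (Finsupp.mem_support_iff.2 hc)) (by omega)
  rw [hev]
  have hrw : ∀ n, h n * δ^[n] c = ∑ i ∈ range N, ∑ j ∈ range N,
      (if j ≤ n then q i * (Nat.choose i (n - j) : F) * δ^[i - (n - j)] (s j) * δ^[n] c
        else 0) := by
    intro n
    rw [hh n, skewMul_eq_sum_range hadd q s N hNq hNs, Finset.sum_mul]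
    apply Finset.sum_congr rfl
    intro i _
    rw [Finset.sum_mul]
    apply Finset.sum_congr rfl
    intro j _
    rw [ite_mul, zero_mul]
  -- LHS rearranged
  have lhs_eq : ∑ n ∈ range (2 * N), h n * δ^[n] c
      = ∑ i ∈ range N, ∑ j ∈ range N, ∑ k ∈ range (i + 1),
        q i * (Nat.choose i k : F) * δ^[i - k] (s j) * δ^[j + k] c := by
    calc ∑ n ∈ range (2 * N), h n * δ^[n] c
        = ∑ n ∈ range (2 * N), ∑ i ∈ range N, ∑ j ∈ range N,
          (if j ≤ n then q i * (Nat.choose i (n - j) : F) * δ^[i - (n - j)] (s j) * δ^[n] c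
            else 0) := Finset.sum_congr rfl (fun n _ => hrw n)
      _ = ∑ i ∈ range N, ∑ j ∈ range N, ∑ n ∈ range (2 * N),
          (if j ≤ n then q i * (Nat.choose i (n - j) : F) * δ^[i - (n - j)] (s j) * δ^[n] c
            else 0) := by
          rw [Finset.sum_comm]
          apply Finset.sum_congr rfl
          intro i _
          rw [Finset.sum_comm]
      _ = ∑ i ∈ range N, ∑ j ∈ range N, ∑ k ∈ range (i + 1),
          q i * (Nat.choose i k : F) * δ^[i - k] (s j) * δ^[j + k] c := by
          apply Finset.sum_congr rfl; intro i hi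
          apply Finset.sum_congr rfl; intro j hj
          rw [Finset.mem_range] at hi hj
          -- inner sum over n
          rw [← Finset.sum_filter]
          have hfil : (range (2 * N)).filter (fun n => j ≤ n) = Finset.Ico j (2 * N) := by
            ext n; simp [Finset.mem_filter, Finset.mem_Ico, and_comm]
          rw [hfil, Finset.sum_Ico_eq_sum_range]
          have hsub : range (i + 1) ⊆ range (2 * N - j) := by
            apply Finset.range_subset_range.2; omega
          rw [← Finset.sum_subset hsub]
          · apply Finset.sum_congr rfl
            intro k hk
            rw [Finset.mem_range, Nat.lt_succ_iff] at hk
            have h1 : j + k - j = k := by omega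
            rw [h1]
          · intro k _ hk
            rw [Finset.mem_range, Nat.lt_succ_iff] at hk
            have : i.choose (j + k - j) = 0 := by
              rw [Nat.add_sub_cancel_left]
              exact Nat.choose_eq_zero_of_lt (by omega)
            rw [this]
            push_cast
            ring
  rw [lhs_eq]
  -- RHS rearranged
  have rhs_eq : ∑ i ∈ q.support, q i * δ^[i] (Ev δ c s)
      = ∑ i ∈ range N, ∑ j ∈ range N, ∑ k ∈ range (i + 1),
        q i * (Nat.choose i k : F) * δ^[i - k] (s j) * δ^[j + k] c := by
    have hEv : Ev δ c s = ∑ j ∈ range N, s j * δ^[j] c := by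
      apply Ev_eq_sum_range
      intro j hj
      by_contra hc
      exact absurd (hNs j (Finsupp.mem_support_iff.2 hc)) (by omega)
    rw [hEv]
    rw [Finset.sum_subset (fun i hi => Finset.mem_range.2 (hNq i hi))]
    · apply Finset.sum_congr rfl
      intro i _
      rw [iter_sum hadd, Finset.mul_sum]
      apply Finset.sum_congr rfl
      intro j _
      have key : ∑ k ∈ range (i+1),
          q i * (Nat.choose i k : F) * δ^[i - k] (s j) * δ^[j + k] c
          = ∑ k ∈ range (i+1),
            q i * ((Nat.choose i k : F) * (δ^[k] (s j) * δ^[i - k] (δ^[j] c))) := by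
        rw [← Finset.sum_range_reflect]
        apply Finset.sum_congr rfl
        intro k hk
        rw [Finset.mem_range, Nat.lt_succ_iff] at hk
        have h1 : i + 1 - 1 - k = i - k := by omega
        have h2 : i - (i - k) = k := by omega
        simp only [h1]
        rw [h2, Nat.choose_symm hk, ← Function.iterate_add_apply]
        have h4 : j + (i - k) = i - k + j := Nat.add_comm _ _
        rw [h4]
        ring
      rw [leibniz hadd hmul i (s j) (δ^[j] c), Finset.mul_sum]
      exact key.symm
    · intro i _ hi
      rw [Finsupp.notMem_support_iff.1 hi]
      simp
  rw [rhs_eq]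

end basic

noncomputable def qfun (δ : F → F) (a : F) (f : ℕ → F) (p : ℕ) : ℕ → F
  | n =>
    if _h : n + 1 < p then
      f (n + 1) + ∑ i ∈ (Finset.Ico (n + 1) p).attach,
        qfun δ a f p i.1 * (Nat.choose i.1 (n + 1) : F) * δ^[i.1 - (n + 1)] a
    else 0
termination_by n => p - n
decreasing_by
  have := (Finset.mem_Ico.1 i.2).1
  omega

lemma qfun_eq (δ : F → F) (a : F) (f : ℕ → F) (p n : ℕ) (hn : n + 1 < p) :
    qfun δ a f p n = f (n + 1) + ∑ i ∈ Finset.Ico (n + 1) p,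
      qfun δ a f p i * (Nat.choose i (n + 1) : F) * δ^[i - (n + 1)] a := by
  rw [qfun, dif_pos hn, ← Finset.sum_attach (Finset.Ico (n + 1) p)
    (fun i => qfun δ a f p i * (Nat.choose i (n + 1) : F) * δ^[i - (n + 1)] a)]

lemma qfun_zero (δ : F → F) (a : F) (f : ℕ → F) (p n : ℕ) (hn : p ≤ n + 1) :
    qfun δ a f p n = 0 := by
  rw [qfun, dif_neg (by omega)]

noncomputable def qF (δ : F → F) (a : F) (f : ℕ → F) (p : ℕ) : ℕ →₀ F :=
  Finsupp.onFinset (range p) (qfun δ a f p) (by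
    intro n hn
    rw [Finset.mem_range]
    by_contra hc
    exact hn (qfun_zero δ a f p n (by omega)))

section main
variable (hadd : ∀ a b : F, δ (a + b) = δ a + δ b)
  (hmul : ∀ a b : F, δ (a * b) = a * δ b + δ a * b)

include hadd hmul

lemma s_apply (a : F) (j : ℕ) :
    (Finsupp.single 1 1 - Finsupp.single 0 a : ℕ →₀ F) j
      = if j = 1 then 1 else if j = 0 then -a else 0 := by
  rcases Nat.lt_or_ge j 2 with h | h
  · interval_cases j <;> simp [Finsupp.single_apply]
  · rw [if_neg (by omega), if_neg (by omega), Finsupp.sub_apply,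
      Finsupp.single_apply, Finsupp.single_apply, if_neg (by omega), if_neg (by omega),
      sub_zero]

lemma skewMul_q_s (a : F) (f : ℕ →₀ F) (p : ℕ) (hf : ∀ n, p ≤ n → f n = 0)
    (n : ℕ) (hn : 1 ≤ n) :
    skewMul δ (qF δ a f p) (Finsupp.single 1 1 - Finsupp.single 0 a) n = f n := by
  classical
  set s : ℕ →₀ F := Finsupp.single 1 1 - Finsupp.single 0 a with hs
  set q : ℕ →₀ F := qF δ a f p with hq
  have hs1 : s 1 = 1 := by rw [hs, s_apply hadd hmul]; simp
  have hs0 : s 0 = -a := by rw [hs, s_apply hadd hmul]; simp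
  have hssup : s.support ⊆ ({0, 1} : Finset ℕ) := by
    intro j hj
    rw [Finsupp.mem_support_iff] at hj
    by_contra hc
    simp only [Finset.mem_insert, Finset.mem_singleton] at hc
    push_neg at hc
    exact hj (by rw [hs, s_apply hadd hmul, if_neg hc.2, if_neg hc.1])
  set M : ℕ := p + n + 1 with hM
  -- step 1: rewrite skewMul as explicit sum over range M × {0,1}
  have e1 : skewMul δ q s n = ∑ i ∈ range M,
      (q i * (Nat.choose i n : F) * δ^[i - n] (-a)
        + q i * (Nat.choose i (n - 1) : F) * δ^[i - (n - 1)] (1 : F)) := by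
    unfold skewMul
    have hqsub : q.support ⊆ range M := by
      intro i hi
      have h2 : i ∈ range p := Finsupp.support_onFinset_subset hi
      rw [Finset.mem_range] at h2 ⊢
      omega
    rw [Finset.sum_subset hqsub]
    · apply Finset.sum_congr rfl
      intro i _
      rw [Finset.sum_subset hssup]
      · rw [Finset.sum_pair (by omega : (0:ℕ) ≠ 1)]
        rw [if_pos (by omega : 0 ≤ n), if_pos hn, hs0, hs1]
        simp only [Nat.sub_zero]
      · intro j _ hj
        have : s j = 0 := Finsupp.notMem_support_iff.1 hj
        simp [this, iter0 hadd]
    · intro i _ hi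
      have : q i = 0 := Finsupp.notMem_support_iff.1 hi
      simp [this]
  rw [e1, Finset.sum_add_distrib]
  -- second sum evaluates to q (n-1)
  have e2 : ∑ i ∈ range M, q i * (Nat.choose i (n - 1) : F) * δ^[i - (n - 1)] (1 : F)
      = q (n - 1) := by
    rw [Finset.sum_eq_single (n - 1)]
    · rw [Nat.choose_self, Nat.sub_self]
      simp
    · intro i _ hne
      rcases Nat.lt_or_ge i (n - 1) with h | h
      · rw [Nat.choose_eq_zero_of_lt h]
        simp
      · have : 1 ≤ i - (n - 1) := by omega
        rw [iter1 hadd hmul _ this]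
        simp
    · intro hmem
      exact absurd (Finset.mem_range.2 (by omega)) hmem
  -- first sum
  have e3 : ∑ i ∈ range M, q i * (Nat.choose i n : F) * δ^[i - n] (-a)
      = - ∑ i ∈ Finset.Ico n p, qfun δ a f p i * (Nat.choose i n : F) * δ^[i - n] a := by
    rw [← Finset.sum_neg_distrib]
    rw [← Finset.sum_subset (show Finset.Ico n p ⊆ range M by
      intro i hi; rw [Finset.mem_range]; have := (Finset.mem_Ico.1 hi).2; omega)]
    · apply Finset.sum_congr rfl
      intro i _
      rw [iter_neg hadd]
      have : q i = qfun δ a f p i := rfl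
      rw [this]; ring
    · intro i _ hi
      rw [Finset.mem_Ico] at hi
      push_neg at hi
      rcases Nat.lt_or_ge i n with h | h
      · rw [Nat.choose_eq_zero_of_lt h]; simp
      · have hip : p ≤ i := hi h
        have : q i = 0 := qfun_zero δ a f p i (by omega)
        rw [this]; simp
  rw [e2, e3]
  have hq1 : q (n - 1) = qfun δ a f p (n - 1) := rfl
  rcases Nat.lt_or_ge n p with h | h
  · rw [hq1, qfun_eq δ a f p (n - 1) (by omega)]
    have hrw : n - 1 + 1 = n := by omega
    rw [hrw]
    ring
  · rw [hq1, qfun_zero δ a f p (n - 1) (by omega), hf n h]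
    rw [Finset.Ico_eq_empty (by omega)]
    simp

lemma Ev_s_zero (c : F) (hc : c ≠ 0) :
    Ev δ c (Finsupp.single 1 1 - Finsupp.single 0 (δ c / c)) = 0 := by
  rw [Ev_eq_sum_range c _ 2 (fun j hj => by
    rw [s_apply hadd hmul, if_neg (by omega), if_neg (by omega)])]
  rw [Finset.sum_range_succ, Finset.sum_range_succ, Finset.sum_range_zero]
  rw [s_apply hadd hmul, s_apply hadd hmul]
  norm_num
  field_simp
  ring

lemma rdvd_single_of_ev (c : F) (hc : c ≠ 0) (p : ℕ) (hp : 1 ≤ p)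
    (f : ℕ →₀ F) (hf : ∀ n, p ≤ n → f n = 0) (hev : Ev δ c f = 0) :
    RDvd δ (Finsupp.single 1 1 - Finsupp.single 0 (δ c / c)) f := by
  classical
  set a : F := δ c / c with ha
  set s : ℕ →₀ F := Finsupp.single 1 1 - Finsupp.single 0 a with hs
  set q : ℕ →₀ F := qF δ a f p with hq
  have hq_s : ∀ n, 1 ≤ n → skewMul δ q s n = f n := fun n hn =>
    skewMul_q_s hadd hmul a f p hf n hn
  set r : F := f 0 - skewMul δ q s 0 with hr
  set h : ℕ →₀ F := f - Finsupp.single 0 r with hh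
  have hhn : ∀ n, h n = skewMul δ q s n := by
    intro n
    rcases Nat.eq_zero_or_pos n with rfl | hn
    · rw [hh]
      simp only [Finsupp.sub_apply, Finsupp.single_eq_same]
      rw [hr]; ring
    · rw [hh]
      simp only [Finsupp.sub_apply]
      rw [Finsupp.single_apply, if_neg (by omega), hq_s n hn, sub_zero]
  have hEh : Ev δ c h = 0 := by
    rw [Ev_skewMul hadd hmul q s h hhn c, Ev_s_zero hadd hmul c hc]
    apply Finset.sum_eq_zero
    intro i _
    rw [iter0 hadd, mul_zero]
  have hEh2 : Ev δ c h = Ev δ c f - r * c := by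
    have h1 : Ev δ c h = ∑ n ∈ range p, h n * δ^[n] c := by
      apply Ev_eq_sum_range
      intro n hn
      rw [hh]
      simp only [Finsupp.sub_apply]
      rw [hf n hn, Finsupp.single_apply, if_neg (by omega), sub_zero]
    have h2 : Ev δ c f = ∑ n ∈ range p, f n * δ^[n] c := Ev_eq_sum_range c f p hf
    have h3 : ∑ n ∈ range p, (Finsupp.single 0 r : ℕ →₀ F) n * δ^[n] c = r * c := by
      rw [Finset.sum_eq_single 0]
      · simp
      · intro n _ hne
        rw [Finsupp.single_apply, if_neg (by omega), zero_mul]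
      · intro hmem
        exact absurd (Finset.mem_range.2 (by omega)) hmem
    rw [h1, h2, ← h3, ← Finset.sum_sub_distrib]
    apply Finset.sum_congr rfl
    intro n _
    rw [hh]
    simp only [Finsupp.sub_apply]
    ring
  have hr0 : r = 0 := by
    rw [hEh, hev] at hEh2
    have : r * c = 0 := by linear_combination hEh2
    rcases mul_eq_zero.1 this with h | h
    · exact h
    · exact absurd h hc
  refine ⟨q, fun n => ?_⟩
  rw [← hhn n, hh]
  simp [hr0]

end main

end SkewAux

open SkewAux

/-- A polynomial `f` of degree `< p` lies in the left ideal generated by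
`g = [x − L(c_1), …, x − L(c_m)]_ℓ` if and only if its coefficient vector lies in the
left kernel of the `p × m` Wronskian matrix `W_p(c_1, …, c_m)` with entries `δ^{i-1}(c_j)`. -/
theorem mem_left_ideal_iff_kernel_wronskian (Fq : Type*) [Field Fq] [Fintype Fq]
    (p : ℕ) [Fact p.Prime] [CharP Fq p]
    (δ : RatFunc Fq → RatFunc Fq)
    (hadd : ∀ a b : RatFunc Fq, δ (a + b) = δ a + δ b)
    (hmul : ∀ a b : RatFunc Fq, δ (a * b) = a * δ b + δ a * b)
    (hδ : δ ≠ 0)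
    (m : ℕ) (hm : m ≤ p - 1) (c : Fin m → RatFunc Fq) (hc0 : ∀ i, c i ≠ 0)
    (hli : ∀ a : Fin m → RatFunc Fq, (∀ i, δ (a i) = 0) → ∑ i, a i * c i = 0 → ∀ i, a i = 0)
    (g : ℕ →₀ RatFunc Fq)
    (hmonic : ∃ d : ℕ, IsMonicOfDeg g d)
    (hdvd : ∀ i, RDvd δ (Finsupp.single 1 1 - Finsupp.single 0 (δ (c i) / c i)) g)
    (hgen : ∀ h : ℕ →₀ RatFunc Fq,
      (∀ i, RDvd δ (Finsupp.single 1 1 - Finsupp.single 0 (δ (c i) / c i)) h) →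
      RDvd δ g h)
    (f : ℕ →₀ RatFunc Fq) (hf : ∀ n : ℕ, p ≤ n → f n = 0) :
    RDvd δ g f ↔ ∀ j : Fin m, ∑ i ∈ Finset.range p, f i * δ^[i] (c j) = 0 := by
  
  have hp : 1 ≤ p := (Fact.out : p.Prime).one_lt.le
  constructor
  · rintro ⟨q, hq⟩ j
    obtain ⟨qj, hqj⟩ := hdvd j
    have hEg : Ev δ (c j) g = 0 := by
      rw [Ev_skewMul hadd hmul qj _ g hqj (c j), Ev_s_zero hadd hmul (c j) (hc0 j)]
      apply Finset.sum_eq_zero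
      intro i _
      rw [iter0 hadd, mul_zero]
    have hEf : Ev δ (c j) f = 0 := by
      rw [Ev_skewMul hadd hmul q g f hq (c j), hEg]
      apply Finset.sum_eq_zero
      intro i _
      rw [iter0 hadd, mul_zero]
    rw [← Ev_eq_sum_range (c j) f p hf]
    exact hEf
  · intro hev
    apply hgen f
    intro j
    apply rdvd_single_of_ev hadd hmul (c j) (hc0 j) p hp f hf
    rw [Ev_eq_sum_range (c j) f p hf]
    exact hev j
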